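/- If u, v : ℝ × ℝ → ℝ satisfy (1/c₀²)u_tt = u_xx − k·∂/∂x[(1+u_x)/√((1+u_x)²+v_x²)] with u ≡ 0, k ≠ 0, and 1 + u_x = 1 > 0, then ∂/∂x[1/√(1+v_x²)] = 0, i.e., v_x·v_xx = 0 wherever derivatives exist; in particular, if v_x ≠ 0 on an interval then v_xx = 0 there. -/

import Mathlib

lemma key_hasDerivAt (f : ℝ → ℝ) (hf : ContDiff ℝ 2 f) (x : ℝ) :
    HasDerivAt (fun x' => 1 / Real.sqrt (1 + (deriv f x') ^ 2))
      (-(deriv f x * deriv (deriv f) x) / (Real.sqrt (1 + (deriv f x) ^ 2)) ^ 3) x := by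
  have h2 : ContDiff ℝ 1 (deriv f) := by
    exact (contDiff_succ_iff_deriv.mp (show ContDiff ℝ ((1:ℕ∞)+1) f by exact_mod_cast hf)).2.2
  have hd : HasDerivAt (deriv f) (deriv (deriv f) x) x :=
    ((h2.differentiable one_ne_zero) x).hasDerivAt
  set y := deriv f x with hy
  have hpos : (0:ℝ) < 1 + y ^ 2 := by positivity
  have hs : (0:ℝ) < Real.sqrt (1 + y ^ 2) := Real.sqrt_pos.mpr hpos
  have hsq : HasDerivAt Real.sqrt (1 / (2 * Real.sqrt (1 + y ^ 2))) (1 + y ^ 2) :=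
    Real.hasDerivAt_sqrt (ne_of_gt hpos)
  have hinner : HasDerivAt (fun x' => 1 + (deriv f x') ^ 2)
      ((2:ℕ) * y ^ 1 * deriv (deriv f) x) x := (hd.pow 2).const_add 1
  have hcomp : HasDerivAt (fun x' => Real.sqrt (1 + (deriv f x') ^ 2))
      (1 / (2 * Real.sqrt (1 + y ^ 2)) * ((2:ℕ) * y ^ 1 * deriv (deriv f) x)) x :=
    hsq.comp x hinner
  have hinv : HasDerivAt (fun x' => (Real.sqrt (1 + (deriv f x') ^ 2))⁻¹) _ x := hcomp.inv (ne_of_gt hs)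
  have heq : (fun x' => (Real.sqrt (1 + (deriv f x') ^ 2))⁻¹)
      = (fun x' => 1 / Real.sqrt (1 + (deriv f x') ^ 2)) := by
    funext x'; rw [one_div]
  rw [heq] at hinv
  convert hinv using 1
  have hsq2 : Real.sqrt (1 + y ^ 2) ^ 2 = 1 + y ^ 2 := Real.sq_sqrt hpos.le
  field_simp
  ring_nf
  rfl

/-- Purely transverse motion (`u ≡ 0`) in the 2D string model with `k ≠ 0` forces
`∂/∂x [1/√(1+v_x²)] = 0`, hence `v_x v_xx = 0`, and in particular `v_xx = 0` on any
interval where `v_x ≠ 0`. -/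
theorem pure_transverse_forces_piecewise_straight
    (c₀ k : ℝ) (hc₀ : 0 < c₀) (hk : k ≠ 0)
    (v : ℝ → ℝ → ℝ) (hv : ∀ t, ContDiff ℝ 2 (fun x => v x t))
    -- the `u`-equation with `u ≡ 0`:
    -- `(1/c₀²)·0 = 0 - k·∂/∂x[(1+0)/√((1+0)²+v_x²)]`
    (hpde : ∀ x t,
      (1 / c₀ ^ 2) * 0
        = 0 - k * deriv (fun x' => 1 / Real.sqrt (1 + (deriv (fun z => v z t) x') ^ 2)) x) :
    (∀ x t, deriv (fun x' => 1 / Real.sqrt (1 + (deriv (fun z => v z t) x') ^ 2)) x = 0)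
    ∧ (∀ x t, deriv (fun z => v z t) x * deriv (deriv (fun z => v z t)) x = 0)
    ∧ (∀ t a b, (∀ x ∈ Set.Ioo a b, deriv (fun z => v z t) x ≠ 0) →
        ∀ x ∈ Set.Ioo a b, deriv (deriv (fun z => v z t)) x = 0) := by
  have h1 : ∀ x t, deriv (fun x' => 1 / Real.sqrt (1 + (deriv (fun z => v z t) x') ^ 2)) x = 0 := by
    intro x t
    have := hpde x t
    simp only [mul_zero, zero_sub] at this
    have h' := this.symm
    rw [neg_eq_zero] at h'
    rcases mul_eq_zero.mp h' with h | h
    · exact absurd h hk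
    · exact h
  have h2 : ∀ x t, deriv (fun z => v z t) x * deriv (deriv (fun z => v z t)) x = 0 := by
    intro x t
    have hkey := key_hasDerivAt (fun z => v z t) (hv t) x
    have hder := hkey.deriv
    rw [h1 x t] at hder
    set y := deriv (fun z => v z t) x
    have hpos : (0:ℝ) < 1 + y ^ 2 := by positivity
    have hs : (0:ℝ) < Real.sqrt (1 + y ^ 2) := Real.sqrt_pos.mpr hpos
    have := hder.symm
    rw [div_eq_zero_iff] at this
    rcases this with h | h
    · linarith [neg_eq_zero.mp h]
    · exact absurd h (by positivity)
  refine ⟨h1, h2, ?_⟩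
  intro t a b hne x hx
  rcases mul_eq_zero.mp (h2 x t) with h | h
  · exact absurd h (hne x hx)
  · exact h
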